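/- Let X be a Banach space, K ⊂ X a closed convex cone, v ∈ int(K) with ‖v‖ = 1 and v + B(0,1) ⊂ K, and f : X → ℝ a K-increasing function. If x ∈ X satisfies limsup_{t→0} |f(x+tv) − f(x)|/|t| < ∞, then f is pointwise Lipschitz at x, i.e. limsup_{y→x} |f(y)−f(x)|/‖y−x‖ < ∞. -/

import Mathlib

open Metric

theorem pointwiseLipschitz_of_coneMonotone
    {X : Type*} [NormedAddCommGroup X] [NormedSpace ℝ X] [CompleteSpace X]
    (K : Set X) (hKclosed : IsClosed K) (hKconv : Convex ℝ K)
    (hKcone : ∀ x ∈ K, ∀ c : ℝ, 0 ≤ c → c • x ∈ K)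
    (v : X) (hvint : v ∈ interior K) (hv : ‖v‖ = 1)
    (hball : ∀ h : X, ‖h‖ < 1 → v + h ∈ K)
    (f : X → ℝ) (hf : ∀ x y : X, y - x ∈ K → f x ≤ f y)
    (x : X)
    (hx : ∃ C : ℝ, ∃ δ > (0:ℝ), ∀ t : ℝ, |t| < δ → |f (x + t • v) - f x| ≤ C * |t|) :
    ∃ C' : ℝ, ∃ δ' > (0:ℝ), ∀ y : X, ‖y - x‖ < δ' → |f y - f x| ≤ C' * ‖y - x‖ := by
  obtain ⟨C, δ, hδ, hC⟩ := hx
  refine ⟨2 * C, δ / 2, by linarith, fun y hy => ?_⟩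
  set r := ‖y - x‖ with hr
  rcases eq_or_lt_of_le (norm_nonneg (y - x)) with h0 | h0
  · have hyx : y = x := by
      have : y - x = 0 := by rwa [eq_comm, norm_eq_zero] at h0
      exact sub_eq_zero.mp this
    have hr0 : r = 0 := hr.trans h0.symm
    rw [hyx, hr0]; simp
  · -- r > 0
    have h2r : |(2 * r)| < δ := by
      rw [abs_of_pos (by linarith)]; linarith
    have hmem : ∀ s : ℝ, |s| = 1 → (2 * r) • (v + (s / (2 * r)) • (y - x)) ∈ K := by
      intro s hs
      apply hKcone _ _ _ (by linarith)
      apply hball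
      rw [norm_smul, Real.norm_eq_abs, abs_div, hs, abs_of_pos (by linarith : (0:ℝ) < 2 * r)]
      rw [← hr]
      rw [div_mul_eq_mul_div, one_mul, div_lt_one (by linarith)]
      linarith
    have hup : f y ≤ f (x + (2 * r) • v) := by
      apply hf
      have := hmem (-1) (by norm_num)
      have heq : (2 * r) • (v + ((-1 : ℝ) / (2 * r)) • (y - x)) = (x + (2 * r) • v) - y := by
        rw [smul_add, smul_smul]
        rw [show (2 * r) * ((-1 : ℝ) / (2 * r)) = -1 by have := (by linarith : (0:ℝ) < r).ne'; field_simp, neg_one_smul]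
        abel
      rwa [heq] at this
    have hdown : f (x + (-(2 * r)) • v) ≤ f y := by
      apply hf
      have := hmem 1 (by norm_num)
      have heq : (2 * r) • (v + ((1 : ℝ) / (2 * r)) • (y - x)) = y - (x + (-(2 * r)) • v) := by
        rw [smul_add, smul_smul]
        rw [show (2 * r) * ((1 : ℝ) / (2 * r)) = 1 by have := (by linarith : (0:ℝ) < r).ne'; field_simp, one_smul, neg_smul]
        abel
      rwa [heq] at this
    have h1 := hC (2 * r) h2r
    have h2 := hC (-(2 * r)) (by rwa [abs_neg])
    rw [show |(2 * r)| = 2 * r from abs_of_pos (by linarith), abs_le] at h1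
    rw [show |(-(2 * r))| = 2 * r by rw [abs_neg]; exact abs_of_pos (by linarith), abs_le] at h2
    rw [abs_le]
    constructor <;> linarith
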